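/- Let β > 0 and let g : ℝ → [0,∞) be a continuously differentiable probability density with |g(x)| ≤ C(1 ∧ |x|^{−1−β}) and |g'(x)| ≤ C(1 ∧ |x|^{−2−β}) for all x ∈ ℝ. Let f : ℝ → ℝ be measurable with ∫_ℝ |f(u)| (1 ∧ |u|^{−1−β}) du < ∞. Then the function G(ρ) := ∫_ℝ f(ρ s) g(s) ds is well-defined and continuously differentiable on (0,∞). -/

import Mathlib

open MeasureTheory Set Filter Topology

lemma stmt14_min_mul {c m : ℝ} (hm : 0 ≤ m) :
    min 1 (c * m) ≤ max 1 c * min 1 m := by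
  have h1 : min 1 (c * m) ≤ max 1 c := le_trans (min_le_left _ _) (le_max_left _ _)
  have h2 : min 1 (c * m) ≤ max 1 c * m :=
    le_trans (min_le_right _ _) (mul_le_mul_of_nonneg_right (le_max_right _ _) hm)
  have h3 : max 1 c * min 1 m = min (max 1 c) (max 1 c * m) := by
    rw [mul_min_of_nonneg _ _ (le_trans zero_le_one (le_max_left 1 c)), mul_one]
  rw [h3]
  exact le_min h1 h2

lemma stmt14_ae_ne_zero : ∀ᵐ u : ℝ, u ≠ 0 := by
  have : (volume : Measure ℝ) {0} = 0 := measure_singleton 0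
  exact Filter.eventually_of_mem (compl_mem_ae_iff.mpr this) fun x hx => hx

/-- the differentiability claim of Remark 5.1 of the paper: let `g` be a
`C¹` probability density with `|g(x)| ≤ C(1 ∧ |x|^{−1−β})` and
`|g'(x)| ≤ C(1 ∧ |x|^{−2−β})`, and let `f` be measurable with
`∫ |f(u)| (1 ∧ |u|^{−1−β}) du < ∞`. Then `G(ρ) = ∫ f(ρs) g(s) ds` is well-defined and
continuously differentiable on `(0,∞)`. -/
theorem statement14
    {β C : ℝ} (hβ : 0 < β) (hC : 0 < C)
    (g : ℝ → ℝ) (hg0 : ∀ x, 0 ≤ g x) (hg1 : ContDiff ℝ 1 g)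
    (hgdens : ∫ x : ℝ, g x = 1)
    (hgb : ∀ x : ℝ, |g x| ≤ C)
    (hgd : ∀ x : ℝ, x ≠ 0 → |g x| ≤ C * |x| ^ (-1 - β))
    (hg'b : ∀ x : ℝ, |deriv g x| ≤ C)
    (hg'd : ∀ x : ℝ, x ≠ 0 → |deriv g x| ≤ C * |x| ^ (-2 - β))
    (f : ℝ → ℝ) (hf : Measurable f)
    (hfint : Integrable (fun u : ℝ => |f u| * min 1 (|u| ^ (-1 - β)))) :
    (∀ ρ > (0 : ℝ), Integrable (fun s : ℝ => f (ρ * s) * g s)) ∧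
    ContDiffOn ℝ 1 (fun ρ : ℝ => ∫ s : ℝ, f (ρ * s) * g s) (Set.Ioi (0 : ℝ)) := by
  have hgc : Continuous g := hg1.continuous
  have hg'c : Continuous (deriv g) := hg1.continuous_deriv le_rfl
  -- pointwise bound for the integrand
  have hbd1 : ∀ t : ℝ, 0 < t → ∀ u : ℝ, u ≠ 0 →
      |f u * g (t * u)| ≤ (C * max 1 (t ^ (-1 - β))) * (|f u| * min 1 (|u| ^ (-1 - β))) := by
    intro t ht u hu
    have htu : t * u ≠ 0 := mul_ne_zero ht.ne' hu
    have h1 : |g (t * u)| ≤ C * min 1 (|t * u| ^ (-1 - β)) := by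
      rcases le_total 1 (|t * u| ^ (-1 - β)) with h | h
      · rw [min_eq_left h, mul_one]; exact hgb (t * u)
      · rw [min_eq_right h]; exact hgd _ htu
    have h2 : |t * u| ^ (-1 - β) = t ^ (-1 - β) * |u| ^ (-1 - β) := by
      rw [abs_mul, abs_of_pos ht, Real.mul_rpow ht.le (abs_nonneg u)]
    have h3 : min 1 (|t * u| ^ (-1 - β)) ≤ max 1 (t ^ (-1 - β)) * min 1 (|u| ^ (-1 - β)) := by
      rw [h2]; exact stmt14_min_mul (Real.rpow_nonneg (abs_nonneg u) _)
    calc |f u * g (t * u)| = |f u| * |g (t * u)| := abs_mul _ _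
      _ ≤ |f u| * (C * (max 1 (t ^ (-1 - β)) * min 1 (|u| ^ (-1 - β)))) :=
          mul_le_mul_of_nonneg_left
            (h1.trans (mul_le_mul_of_nonneg_left h3 hC.le)) (abs_nonneg _)
      _ = (C * max 1 (t ^ (-1 - β))) * (|f u| * min 1 (|u| ^ (-1 - β))) := by ring
  -- pointwise bound for the differentiated integrand
  have hbd2 : ∀ a : ℝ, 0 < a → ∀ x : ℝ, a ≤ x → ∀ u : ℝ,
      |f u * (u * deriv g (x * u))| ≤
        (C * max 1 (a ^ (-2 - β))) * (|f u| * min 1 (|u| ^ (-1 - β))) := by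
    intro a ha x hx u
    have hx0 : 0 < x := lt_of_lt_of_le ha hx
    rcases eq_or_ne u 0 with rfl | hu
    · have : |(0:ℝ)| ^ (-1 - β) = 0 := by
        rw [abs_zero]; exact Real.zero_rpow (by linarith)
      simp only [abs_mul, abs_zero, zero_mul, mul_zero, this]
      positivity
    · have hxu : x * u ≠ 0 := mul_ne_zero hx0.ne' hu
      rcases le_or_gt (|u|) 1 with h1 | h1
      · have hmin : min 1 (|u| ^ (-1 - β)) = 1 :=
          min_eq_left (Real.one_le_rpow_of_pos_of_le_one_of_nonpos
            (abs_pos.mpr hu) h1 (by linarith))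
        have hub : |u * deriv g (x * u)| ≤ C := by
          rw [abs_mul]
          calc |u| * |deriv g (x * u)| ≤ 1 * C :=
                mul_le_mul h1 (hg'b _) (abs_nonneg _) zero_le_one
            _ = C := one_mul C
        have hmax : (1:ℝ) ≤ max 1 (a ^ (-2 - β)) := le_max_left _ _
        calc |f u * (u * deriv g (x * u))| = |f u| * |u * deriv g (x * u)| := abs_mul _ _
          _ ≤ |f u| * C := mul_le_mul_of_nonneg_left hub (abs_nonneg _)
          _ ≤ (C * max 1 (a ^ (-2 - β))) * (|f u| * min 1 (|u| ^ (-1 - β))) := by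
              rw [hmin, mul_one]
              calc |f u| * C = C * 1 * |f u| := by ring
                _ ≤ C * max 1 (a ^ (-2 - β)) * |f u| :=
                    mul_le_mul_of_nonneg_right
                      (mul_le_mul_of_nonneg_left hmax hC.le) (abs_nonneg _)
      · have hd : |deriv g (x * u)| ≤ C * (a ^ (-2 - β) * |u| ^ (-2 - β)) := by
          have h2 : |x * u| ^ (-2 - β) = x ^ (-2 - β) * |u| ^ (-2 - β) := by
            rw [abs_mul, abs_of_pos hx0, Real.mul_rpow hx0.le (abs_nonneg u)]
          have h3 : x ^ (-2 - β) ≤ a ^ (-2 - β) :=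
            Real.rpow_le_rpow_of_nonpos ha hx (by linarith)
          calc |deriv g (x * u)| ≤ C * |x * u| ^ (-2 - β) := hg'd _ hxu
            _ = C * (x ^ (-2 - β) * |u| ^ (-2 - β)) := by rw [h2]
            _ ≤ C * (a ^ (-2 - β) * |u| ^ (-2 - β)) :=
                mul_le_mul_of_nonneg_left
                  (mul_le_mul_of_nonneg_right h3 (Real.rpow_nonneg (abs_nonneg u) _)) hC.le
        have hu1 : |u| * |u| ^ (-2 - β) = |u| ^ (-1 - β) := by
          nth_rewrite 1 [← Real.rpow_one (|u|)]
          rw [← Real.rpow_add (abs_pos.mpr hu)]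
          ring_nf
        have hmin : min 1 (|u| ^ (-1 - β)) = |u| ^ (-1 - β) :=
          min_eq_right (Real.rpow_le_one_of_one_le_of_nonpos h1.le (by linarith))
        calc |f u * (u * deriv g (x * u))| = |f u| * (|u| * |deriv g (x * u)|) := by
              rw [abs_mul, abs_mul]
          _ ≤ |f u| * (|u| * (C * (a ^ (-2 - β) * |u| ^ (-2 - β)))) :=
              mul_le_mul_of_nonneg_left
                (mul_le_mul_of_nonneg_left hd (abs_nonneg u)) (abs_nonneg _)
          _ = (C * a ^ (-2 - β)) * (|f u| * (|u| * |u| ^ (-2 - β))) := by ring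
          _ = (C * a ^ (-2 - β)) * (|f u| * min 1 (|u| ^ (-1 - β))) := by rw [hu1, hmin]
          _ ≤ (C * max 1 (a ^ (-2 - β))) * (|f u| * min 1 (|u| ^ (-1 - β))) := by
              apply mul_le_mul_of_nonneg_right
                (mul_le_mul_of_nonneg_left (le_max_right _ _) hC.le)
              positivity
  -- measurability
  have hmeasK : ∀ t : ℝ, AEStronglyMeasurable (fun u : ℝ => f u * g (t * u)) volume :=
    fun t => (hf.mul (hgc.measurable.comp (measurable_const_mul t))).aestronglyMeasurable
  have hmeasK' : ∀ t : ℝ,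
      AEStronglyMeasurable (fun u : ℝ => f u * (u * deriv g (t * u))) volume :=
    fun t => (hf.mul (measurable_id.mul
      (hg'c.measurable.comp (measurable_const_mul t)))).aestronglyMeasurable
  -- integrability of the integrand
  have hKint : ∀ t : ℝ, 0 < t → Integrable (fun u : ℝ => f u * g (t * u)) := by
    intro t ht
    refine (hfint.const_mul (C * max 1 (t ^ (-1 - β)))).mono' (hmeasK t) ?_
    filter_upwards [stmt14_ae_ne_zero] with u hu
    rw [Real.norm_eq_abs]
    exact hbd1 t ht u hu
  -- part 1
  have part1 : ∀ ρ > (0:ℝ), Integrable (fun s : ℝ => f (ρ * s) * g s) := by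
    intro ρ hρ
    have h := (hKint ρ⁻¹ (inv_pos.mpr hρ)).comp_mul_left' (R := ρ) hρ.ne'
    refine h.congr (Filter.Eventually.of_forall fun s => ?_)
    simp only [inv_mul_cancel_left₀ hρ.ne']
  -- derivative under the integral sign
  have hKderiv : ∀ t : ℝ, 0 < t →
      Integrable (fun u : ℝ => f u * (u * deriv g (t * u))) ∧
      HasDerivAt (fun x : ℝ => ∫ u : ℝ, f u * g (x * u))
        (∫ u : ℝ, f u * (u * deriv g (t * u))) t := by
    intro t ht
    have hball : ∀ x ∈ Metric.ball t (t/2), t/2 ≤ x := by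
      intro x hx
      rw [Metric.mem_ball, Real.dist_eq] at hx
      rcases abs_lt.mp hx with ⟨h1, h2⟩
      linarith
    refine hasDerivAt_integral_of_dominated_loc_of_deriv_le (s := Metric.ball t (t/2))
      (F := fun x u => f u * g (x * u))
      (F' := fun x u => f u * (u * deriv g (x * u)))
      (bound := fun u => C * max 1 ((t/2) ^ (-2 - β)) * (|f u| * min 1 (|u| ^ (-1 - β))))
      (Metric.ball_mem_nhds t (by linarith))
      (Filter.Eventually.of_forall fun x => hmeasK x) (hKint t ht) (hmeasK' t)
      (Filter.Eventually.of_forall fun u x hx => ?_)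
      (hfint.const_mul (C * max 1 ((t/2) ^ (-2 - β))))
      (Filter.Eventually.of_forall fun u x _ => ?_)
    · rw [Real.norm_eq_abs]
      exact hbd2 (t/2) (by linarith) x (hball x hx) u
    · have hgd' : HasDerivAt g (deriv g (x * u)) (x * u) :=
        (hg1.differentiable one_ne_zero (x * u)).hasDerivAt
      have hlin : HasDerivAt (fun y : ℝ => y * u) u x := hasDerivAt_mul_const u
      have h : HasDerivAt (fun y : ℝ => f u * g (y * u)) (f u * (deriv g (x * u) * u)) x :=
        (hgd'.comp x hlin).const_mul (f u)
      exact h.congr_deriv (by ring)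
  -- continuity of the derivative
  have hK'cont : ContinuousOn
      (fun t : ℝ => ∫ u : ℝ, f u * (u * deriv g (t * u))) (Ioi (0:ℝ)) := by
    intro t ht
    have ht0 : (0:ℝ) < t := ht
    apply ContinuousAt.continuousWithinAt
    refine continuousAt_of_dominated (Filter.Eventually.of_forall fun x => hmeasK' x)
      ?_ (hfint.const_mul (C * max 1 ((t/2) ^ (-2 - β)))) ?_
    · have hmem : Ioi (t/2) ∈ 𝓝 t := Ioi_mem_nhds (by linarith)
      filter_upwards [hmem] with x hx
      exact Filter.Eventually.of_forall fun u => by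
        rw [Real.norm_eq_abs]
        exact hbd2 (t/2) (by linarith) x (le_of_lt hx) u
    · exact Filter.Eventually.of_forall fun u =>
        (continuous_const.mul (continuous_const.mul
          (hg'c.comp (continuous_id.mul continuous_const)))).continuousAt
  -- K is C¹ on Ioi 0
  have hKdiff : DifferentiableOn ℝ (fun x : ℝ => ∫ u : ℝ, f u * g (x * u)) (Ioi (0:ℝ)) :=
    fun t ht => ((hKderiv t ht).2.differentiableAt).differentiableWithinAt
  have hKC1 : ContDiffOn ℝ 1 (fun x : ℝ => ∫ u : ℝ, f u * g (x * u)) (Ioi (0:ℝ)) := by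
    rw [← zero_add (1 : WithTop ℕ∞), contDiffOn_succ_iff_deriv_of_isOpen isOpen_Ioi]
    refine ⟨hKdiff, ?_, ?_⟩
    · intro h; simp at h
    · rw [contDiffOn_zero]
      exact hK'cont.congr fun t ht => ((hKderiv t ht).2).deriv
  -- assemble
  refine ⟨part1, ?_⟩
  have hinv : ContDiffOn ℝ 1 (fun ρ : ℝ => ρ⁻¹) (Ioi (0:ℝ)) :=
    (contDiffOn_inv (𝕜 := ℝ)).mono fun x hx => (ne_of_gt hx : x ≠ 0)
  have hcomp : ContDiffOn ℝ 1
      (fun ρ : ℝ => ρ⁻¹ * ∫ u : ℝ, f u * g (ρ⁻¹ * u)) (Ioi (0:ℝ)) :=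
    hinv.mul (hKC1.comp hinv fun x hx => mem_Ioi.mpr (inv_pos.mpr hx))
  refine hcomp.congr fun ρ hρ => ?_
  have hρ0 : (0:ℝ) < ρ := hρ
  calc (∫ s : ℝ, f (ρ * s) * g s)
      = ∫ s : ℝ, f (ρ * s) * g (ρ⁻¹ * (ρ * s)) := by
        congr 1; funext s; rw [inv_mul_cancel_left₀ hρ0.ne']
    _ = |ρ⁻¹| • ∫ u : ℝ, f u * g (ρ⁻¹ * u) :=
        MeasureTheory.Measure.integral_comp_mul_left (fun u : ℝ => f u * g (ρ⁻¹ * u)) ρ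
    _ = ρ⁻¹ * ∫ u : ℝ, f u * g (ρ⁻¹ * u) := by
        rw [abs_of_pos (inv_pos.mpr hρ0), smul_eq_mul]
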